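/- (Selberg's theorem on the Eisenstein series.) There exists a function G : ℍ × ℂ → ℂ such that: (i) for every z = x+iy ∈ ℍ, the function s ↦ G(z,s) is meromorphic on ℂ; (ii) for every z = x+iy ∈ ℍ and every s with Re(s) > 1, G(z,s) = (1/2) π^{-s} Γ(s) ∑_{(m,n) ∈ ℤ² \ {(0,0)}} y^s / |m z + n|^{2s}; and (iii) G(z,s) = G(z, 1−s) for all z ∈ ℍ and all s ∈ ℂ. -/

import Mathlib

noncomputable section

open Real Complex Filter Topology Asymptotics Set MeasureTheory

namespace SelbergProof

/-- The quadratic form `|mz+n|²/y` of determinant 1 attached to `z`. -/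
def Q (z : UpperHalfPlane) (p : ℤ × ℤ) : ℝ :=
  ‖(p.1 : ℂ) * (z : ℂ) + (p.2 : ℂ)‖ ^ 2 / z.im

/-- Lower bound constant for `Q`. -/
def δ (z : UpperHalfPlane) : ℝ := EisensteinSeries.r z ^ 2 / z.im

lemma δ_pos (z : UpperHalfPlane) : 0 < δ z :=
  div_pos (pow_pos (EisensteinSeries.r_pos z) 2) z.im_pos

lemma Q_nonneg (z : UpperHalfPlane) (p : ℤ × ℤ) : 0 ≤ Q z p :=
  div_nonneg (sq_nonneg _) z.im_pos.le

lemma Q_zero (z : UpperHalfPlane) : Q z 0 = 0 := by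
  simp [Q]

lemma Q_eq (z : UpperHalfPlane) (p : ℤ × ℤ) :
    Q z p = (((p.1 : ℝ) * z.re + p.2) ^ 2 + (p.1 : ℝ) ^ 2 * z.im ^ 2) / z.im := by
  rw [Q]
  congr 1
  rw [← Complex.normSq_eq_norm_sq, Complex.normSq_apply]
  simp only [Complex.add_re, Complex.add_im, Complex.mul_re, Complex.mul_im,
    Complex.intCast_re, Complex.intCast_im, UpperHalfPlane.coe_re, UpperHalfPlane.coe_im]
  ring

lemma vec_ne_zero {p : ℤ × ℤ} (hp : p ≠ 0) : ![p.1, p.2] ≠ 0 := by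
  intro h
  apply hp
  have h1 := congrFun h 0
  have h2 := congrFun h 1
  simp only [Matrix.cons_val_zero, Matrix.cons_val_one, Matrix.head_cons, Pi.zero_apply] at h1 h2
  exact Prod.ext h1 h2

lemma abs_linear_pos (z : UpperHalfPlane) {p : ℤ × ℤ} (hp : p ≠ 0) :
    0 < ‖(p.1 : ℂ) * (z : ℂ) + (p.2 : ℂ)‖ := by
  rw [norm_pos_iff]
  have h0 : ![(p.1 : ℝ), (p.2 : ℝ)] ≠ 0 := by
    intro h
    apply hp
    have h1 := congrFun h 0
    have h2 := congrFun h 1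
    simp only [Matrix.cons_val_zero, Matrix.cons_val_one, Matrix.head_cons, Pi.zero_apply,
      Int.cast_eq_zero] at h1 h2
    exact Prod.ext h1 h2
  have := UpperHalfPlane.linear_ne_zero (cd := ![(p.1 : ℝ), (p.2 : ℝ)]) z h0
  simpa using this

lemma Q_pos (z : UpperHalfPlane) {p : ℤ × ℤ} (hp : p ≠ 0) : 0 < Q z p :=
  div_pos (pow_pos (abs_linear_pos z hp) 2) z.im_pos

lemma Q_lower (z : UpperHalfPlane) (p : ℤ × ℤ) :
    δ z * ‖![p.1, p.2]‖ ^ 2 ≤ Q z p := by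
  by_cases hp : p = 0
  · subst hp
    simp [Q_zero, EisensteinSeries.norm_eq_max_natAbs]
  · have h := EisensteinSeries.r_mul_max_le z (vec_ne_zero hp)
    simp only [Matrix.cons_val_zero, Matrix.cons_val_one, Matrix.head_cons] at h
    have h1 : δ z * ‖![p.1, p.2]‖ ^ 2
        = (EisensteinSeries.r z * ‖![p.1, p.2]‖) ^ 2 / z.im := by
      rw [δ]; ring
    rw [h1, Q]
    gcongr
    exact mul_nonneg (EisensteinSeries.r_pos z).le (norm_nonneg _)

lemma one_le_norm_vec {p : ℤ × ℤ} (hp : p ≠ 0) : (1 : ℝ) ≤ ‖![p.1, p.2]‖ := by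
  rw [EisensteinSeries.norm_eq_max_natAbs]
  have hor : p.1 ≠ 0 ∨ p.2 ≠ 0 := by
    rcases eq_or_ne p.1 0 with h | h
    · exact Or.inr fun h2 => hp (Prod.ext h h2)
    · exact Or.inl h
  have : 1 ≤ max (p.1.natAbs) (p.2.natAbs) := by
    rcases hor with h | h
    · exact le_trans (Nat.one_le_iff_ne_zero.mpr (Int.natAbs_ne_zero.mpr h)) (Nat.le_max_left _ _)
    · exact le_trans (Nat.one_le_iff_ne_zero.mpr (Int.natAbs_ne_zero.mpr h)) (Nat.le_max_right _ _)
  simp only [Matrix.cons_val_zero, Matrix.cons_val_one, Matrix.head_cons]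
  exact_mod_cast this

lemma Q_ge_of_ne (z : UpperHalfPlane) {p : ℤ × ℤ} (hp : p ≠ 0) : δ z ≤ Q z p := by
  have h1 := Q_lower z p
  have h2 := one_le_norm_vec hp
  nlinarith [δ_pos z, norm_nonneg ![p.1, p.2], sq_nonneg (‖![p.1, p.2]‖ - 1)]

lemma Q_ge_half (z : UpperHalfPlane) (p : ℤ × ℤ) :
    δ z * (((p.1 : ℝ) ^ 2 + (p.2 : ℝ) ^ 2) / 2) ≤ Q z p := by
  have h1 := Q_lower z p
  have h2 : ((p.1 : ℝ) ^ 2 + (p.2 : ℝ) ^ 2) / 2 ≤ ‖![p.1, p.2]‖ ^ 2 := by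
    rw [EisensteinSeries.norm_eq_max_natAbs]
    simp only [Matrix.cons_val_zero, Matrix.cons_val_one, Matrix.head_cons]
    have key : ∀ n : ℤ, |(n : ℝ)| = (n.natAbs : ℝ) := fun n => by
      rw [Nat.cast_natAbs, Int.cast_abs]
    have ha : |(p.1 : ℝ)| ≤ ((max (p.1.natAbs) (p.2.natAbs) : ℕ) : ℝ) := by
      rw [key]; exact_mod_cast Nat.le_max_left _ _
    have hb : |(p.2 : ℝ)| ≤ ((max (p.1.natAbs) (p.2.natAbs) : ℕ) : ℝ) := by
      rw [key]; exact_mod_cast Nat.le_max_right _ _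
    push_cast at ha hb ⊢
    nlinarith [_root_.sq_abs ((p.1 : ℝ)), _root_.sq_abs ((p.2 : ℝ)), abs_nonneg ((p.1:ℝ)),
      abs_nonneg ((p.2:ℝ))]
  nlinarith [δ_pos z]

/-! ### Summability -/

lemma summable_exp_int {a : ℝ} (ha : 0 < a) :
    Summable fun n : ℤ => rexp (-a * (n : ℝ) ^ 2) := by
  have hgeo : Summable fun n : ℕ => rexp (-a) ^ n :=
    summable_geometric_of_lt_one (Real.exp_pos _).le
      (Real.exp_lt_one_iff.mpr (neg_lt_zero.mpr ha))
  have key : ∀ n : ℕ, rexp (-a * (n : ℝ) ^ 2) ≤ rexp (-a) ^ n := by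
    intro n
    rw [← Real.exp_nat_mul]
    apply Real.exp_le_exp.mpr
    have h1 : (n : ℝ) ≤ (n : ℝ) ^ 2 := by
      rcases Nat.eq_zero_or_pos n with h | h
      · simp [h]
      · have h2 : (1 : ℝ) ≤ (n : ℝ) := by exact_mod_cast h
        nlinarith
    nlinarith
  apply Summable.of_nat_of_neg
  · exact hgeo.of_nonneg_of_le (fun n => (Real.exp_pos _).le) key
  · refine hgeo.of_nonneg_of_le (fun n => (Real.exp_pos _).le) (fun n => ?_)
    calc rexp (-a * ((-(n : ℤ) : ℤ) : ℝ) ^ 2) = rexp (-a * (n : ℝ) ^ 2) := by push_cast; ring_nf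
    _ ≤ rexp (-a) ^ n := key n

lemma summable_exp_pair {a b : ℝ} (ha : 0 < a) (hb : 0 < b) :
    Summable fun p : ℤ × ℤ => rexp (-a * (p.1 : ℝ) ^ 2) * rexp (-b * (p.2 : ℝ) ^ 2) :=
  (summable_exp_int ha).mul_of_nonneg (summable_exp_int hb)
    (fun _ => (Real.exp_pos _).le) (fun _ => (Real.exp_pos _).le)

lemma summable_exp_Q (z : UpperHalfPlane) {t : ℝ} (ht : 0 < t) :
    Summable fun p : ℤ × ℤ => rexp (-π * Q z p * t) := by
  have ha : 0 < π * t * δ z / 2 :=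
    div_pos (mul_pos (mul_pos Real.pi_pos ht) (δ_pos z)) two_pos
  apply (summable_exp_pair ha ha).of_nonneg_of_le (fun _ => (Real.exp_pos _).le)
  intro p
  rw [← Real.exp_add]
  apply Real.exp_le_exp.mpr
  have h1 := Q_ge_half z p
  have h2 : π * t * (δ z * (((p.1 : ℝ) ^ 2 + (p.2 : ℝ) ^ 2) / 2)) ≤ π * t * Q z p :=
    mul_le_mul_of_nonneg_left h1 (by positivity)
  nlinarith

/-! ### The theta function -/

/-- 2-dimensional theta function attached to `z`. -/
def θ (z : UpperHalfPlane) (t : ℝ) : ℂ :=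
  ∑' p : ℤ × ℤ, (rexp (-π * Q z p * t) : ℂ)

lemma summable_cexp (z : UpperHalfPlane) {t : ℝ} (ht : 0 < t) :
    Summable fun p : ℤ × ℤ => (rexp (-π * Q z p * t) : ℂ) := by
  apply Summable.of_norm
  refine (summable_exp_Q z ht).congr fun p => ?_
  rw [Complex.norm_real, Real.norm_eq_abs, abs_of_pos (Real.exp_pos _)]

lemma hasSum_theta (z : UpperHalfPlane) {t : ℝ} (ht : 0 < t) :
    HasSum (fun p : ℤ × ℤ => (rexp (-π * Q z p * t) : ℂ)) (θ z t) :=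
  (summable_cexp z ht).hasSum

lemma hasSum_theta_sub_one (z : UpperHalfPlane) {t : ℝ} (ht : 0 < t) :
    HasSum (fun p : ℤ × ℤ =>
      (if p ≠ 0 then (1 : ℂ) else 0) * rexp (-π * Q z p * t)) (θ z t - 1) := by
  have h0 : HasSum (fun p : ℤ × ℤ => if p = 0 then (1 : ℂ) else 0) 1 := hasSum_ite_eq 0 1
  have h := (hasSum_theta z ht).sub h0
  have heq : (fun p : ℤ × ℤ => (if p ≠ 0 then (1 : ℂ) else 0) * rexp (-π * Q z p * t))
      = fun p : ℤ × ℤ => (rexp (-π * Q z p * t) : ℂ) - (if p = 0 then (1 : ℂ) else 0) := by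
    funext p
    by_cases hp : p = 0
    · simp [hp, Q_zero]
    · simp [hp]
  rw [heq]
  exact h

lemma continuousOn_theta (z : UpperHalfPlane) : ContinuousOn (θ z) (Ioi 0) := by
  intro t ht
  rw [mem_Ioi] at ht
  have h2 : ContinuousOn (fun u : ℝ => ∑' p : ℤ × ℤ, (rexp (-π * Q z p * u) : ℂ))
      (Ioi (t / 2)) := by
    apply continuousOn_tsum (u := fun p => rexp (-π * Q z p * (t / 2)))
    · intro p
      apply Continuous.continuousOn
      exact Complex.continuous_ofReal.comp (Real.continuous_exp.comp (by continuity))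
    · exact summable_exp_Q z (by positivity)
    · intro p u hu
      rw [mem_Ioi] at hu
      have h3 : -π * Q z p * u ≤ -π * Q z p * (t / 2) := by
        have h4 : π * Q z p * (t / 2) ≤ π * Q z p * u :=
          mul_le_mul_of_nonneg_left hu.le (mul_nonneg Real.pi_pos.le (Q_nonneg z p))
        linarith
      calc ‖((rexp (-π * Q z p * u) : ℝ) : ℂ)‖ = rexp (-π * Q z p * u) := by
            rw [Complex.norm_real, Real.norm_eq_abs, abs_of_pos (Real.exp_pos _)]
      _ ≤ rexp (-π * Q z p * (t / 2)) := Real.exp_le_exp.mpr h3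
  exact ((h2.continuousAt (Ioi_mem_nhds (by linarith))).congr
    (by filter_upwards with u using rfl)).continuousWithinAt

/-! ### Poisson summation -/

lemma poisson' {u : ℝ} (hu : 0 < u) (c : ℝ) :
    ∑' n : ℤ, cexp (-(π : ℂ) * u * (n : ℂ) ^ 2 - 2 * π * Complex.I * c * (n : ℂ))
      = (1 / (Real.sqrt u : ℂ)) * ∑' n : ℤ, cexp (-(π : ℂ) / u * ((n : ℂ) + (c : ℂ)) ^ 2) := by
  have h := Complex.tsum_exp_neg_quadratic (a := (u : ℂ)) (by simpa using hu)
    (-Complex.I * (c : ℂ))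
  have hsqrt : ((u : ℂ)) ^ (1 / 2 : ℂ) = (Real.sqrt u : ℂ) := by
    rw [Real.sqrt_eq_rpow, show (1 / 2 : ℂ) = ((1 / 2 : ℝ) : ℂ) by norm_num,
      Complex.ofReal_cpow hu.le]
  have hIc : Complex.I * (-Complex.I * (c : ℂ)) = (c : ℂ) := by
    rw [neg_mul, mul_neg, ← mul_assoc, Complex.I_mul_I]
    ring
  calc ∑' n : ℤ, cexp (-(π : ℂ) * u * (n : ℂ) ^ 2 - 2 * π * Complex.I * c * (n : ℂ))
      = ∑' n : ℤ, cexp (-(π : ℂ) * (u : ℂ) * (n : ℂ) ^ 2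
          + 2 * π * (-Complex.I * (c : ℂ)) * (n : ℂ)) := by
        refine tsum_congr fun n => ?_
        congr 1
        ring
    _ = 1 / (u : ℂ) ^ (1 / 2 : ℂ) * ∑' n : ℤ,
          cexp (-(π : ℂ) / u * ((n : ℂ) + Complex.I * (-Complex.I * (c : ℂ))) ^ 2) := h
    _ = (1 / (Real.sqrt u : ℂ)) * ∑' n : ℤ, cexp (-(π : ℂ) / u * ((n : ℂ) + (c : ℂ)) ^ 2) := by
        rw [hsqrt]
        congr 1
        refine tsum_congr fun n => ?_
        rw [hIc]

lemma poisson {u : ℝ} (hu : 0 < u) (c : ℝ) :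
    ∑' n : ℤ, cexp (-(π : ℂ) / u * ((n : ℂ) + (c : ℂ)) ^ 2)
      = (Real.sqrt u : ℂ) * ∑' n : ℤ,
          cexp (-(π : ℂ) * u * (n : ℂ) ^ 2 - 2 * π * Complex.I * c * (n : ℂ)) := by
  rw [poisson' hu c, ← mul_assoc, mul_one_div, div_self
    (Complex.ofReal_ne_zero.mpr (Real.sqrt_pos.mpr hu).ne'), one_mul]

/-! ### Double sum representation and functional equation -/

lemma theta_double (z : UpperHalfPlane) {t : ℝ} (ht : 0 < t) :
    θ z t = ∑' m : ℤ, ∑' n : ℤ,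
      cexp (-(π : ℂ) * (t / z.im) * ((n : ℂ) + (m : ℂ) * (z.re : ℂ)) ^ 2
        - (π : ℂ) * (t * z.im) * (m : ℂ) ^ 2) := by
  have hy : (z.im : ℂ) ≠ 0 := Complex.ofReal_ne_zero.mpr z.im_pos.ne'
  have heq : ∀ p : ℤ × ℤ, (rexp (-π * Q z p * t) : ℂ)
      = cexp (-(π : ℂ) * (t / z.im) * ((p.2 : ℂ) + (p.1 : ℂ) * (z.re : ℂ)) ^ 2
          - (π : ℂ) * (t * z.im) * (p.1 : ℂ) ^ 2) := by
    intro p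
    rw [Complex.ofReal_exp]
    congr 1
    rw [Q_eq]
    push_cast
    field_simp
    ring
  rw [θ, tsum_congr heq]
  exact Summable.tsum_prod ((summable_cexp z ht).congr heq)

lemma theta_FE (z : UpperHalfPlane) {t : ℝ} (ht : 0 < t) :
    θ z (1 / t) = (t : ℂ) * θ z t := by
  have hy : 0 < z.im := z.im_pos
  have hty : 0 < t * z.im := mul_pos ht hy
  have hyt : 0 < z.im / t := div_pos hy ht
  have htne : (t : ℂ) ≠ 0 := Complex.ofReal_ne_zero.mpr ht.ne'
  have hyne : (z.im : ℂ) ≠ 0 := Complex.ofReal_ne_zero.mpr hy.ne'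
  set F : ℤ → ℤ → ℂ := fun m k =>
    cexp (-(π : ℂ) * (z.im / t) * (m : ℂ) ^ 2 - (π : ℂ) * (t * z.im) * (k : ℂ) ^ 2
      - 2 * π * Complex.I * (z.re : ℂ) * ((m : ℂ) * (k : ℂ))) with hF
  have hFnorm : ∀ m k : ℤ, ‖F m k‖
      = rexp (-(π * (z.im / t)) * (m : ℝ) ^ 2) * rexp (-(π * (t * z.im)) * (k : ℝ) ^ 2) := by
    intro m k
    simp only [hF]
    have harg : -(π : ℂ) * (z.im / t) * (m : ℂ) ^ 2 - (π : ℂ) * (t * z.im) * (k : ℂ) ^ 2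
        - 2 * π * Complex.I * (z.re : ℂ) * ((m : ℂ) * (k : ℂ))
        = ((-(π * (z.im / t)) * (m : ℝ) ^ 2 + -(π * (t * z.im)) * (k : ℝ) ^ 2 : ℝ) : ℂ)
          + ((-(2 * π * z.re * ((m : ℝ) * (k : ℝ))) : ℝ) : ℂ) * Complex.I := by
      push_cast
      ring
    rw [harg, Complex.norm_exp]
    simp only [Complex.add_re, Complex.ofReal_re, Complex.mul_re, Complex.ofReal_im,
      Complex.I_re, Complex.I_im, mul_zero, zero_mul, mul_one, sub_zero, add_zero, zero_sub,
      neg_zero]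
    rw [Real.exp_add]
  have hFsummable : Summable (Function.uncurry F) := by
    apply Summable.of_norm
    refine (summable_exp_pair (a := π * (z.im / t)) (b := π * (t * z.im))
      (by positivity) (by positivity)).congr fun q => ?_
    exact (hFnorm q.1 q.2).symm
  calc θ z (1 / t)
      = ∑' m : ℤ, ∑' n : ℤ,
          cexp (-(π : ℂ) / ((t * z.im : ℝ) : ℂ) * ((n : ℂ) + (((m : ℝ) * z.re : ℝ) : ℂ)) ^ 2)
          * cexp (-(π : ℂ) * (z.im / t) * (m : ℂ) ^ 2) := by
        rw [theta_double z (show (0:ℝ) < 1 / t by positivity)]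
        refine tsum_congr fun m => tsum_congr fun n => ?_
        rw [← Complex.exp_add]
        congr 1
        push_cast
        field_simp
        ring
    _ = ∑' m : ℤ, ((Real.sqrt (t * z.im) : ℂ) * ∑' k : ℤ,
          cexp (-(π : ℂ) * ((t * z.im : ℝ) : ℂ) * (k : ℂ) ^ 2
            - 2 * π * Complex.I * (((m : ℝ) * z.re : ℝ) : ℂ) * (k : ℂ)))
          * cexp (-(π : ℂ) * (z.im / t) * (m : ℂ) ^ 2) := by
        refine tsum_congr fun m => ?_
        rw [tsum_mul_right, poisson hty ((m : ℝ) * z.re)]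
    _ = (Real.sqrt (t * z.im) : ℂ) * ∑' m : ℤ, ∑' k : ℤ, F m k := by
        rw [← tsum_mul_left]
        refine tsum_congr fun m => ?_
        rw [mul_assoc]
        congr 1
        rw [← tsum_mul_right]
        refine tsum_congr fun k => ?_
        simp only [hF]
        rw [← Complex.exp_add]
        congr 1
        push_cast
        ring
    _ = (Real.sqrt (t * z.im) : ℂ) * ∑' k : ℤ, ∑' m : ℤ, F m k := by
        congr 1
        exact (Summable.tsum_comm hFsummable).symm
    _ = (Real.sqrt (t * z.im) : ℂ) * ∑' k : ℤ, ((1 / (Real.sqrt (z.im / t) : ℂ)) *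
          ∑' j : ℤ, cexp (-(π : ℂ) / ((z.im / t : ℝ) : ℂ)
            * ((j : ℂ) + ((z.re * (k : ℝ) : ℝ) : ℂ)) ^ 2))
          * cexp (-(π : ℂ) * (t * z.im) * (k : ℂ) ^ 2) := by
        congr 1
        refine tsum_congr fun k => ?_
        rw [← poisson' hyt (z.re * (k : ℝ)), ← tsum_mul_right]
        refine tsum_congr fun m => ?_
        simp only [hF]
        rw [← Complex.exp_add]
        congr 1
        push_cast
        ring
    _ = ((Real.sqrt (t * z.im) : ℂ) * (1 / (Real.sqrt (z.im / t) : ℂ))) * ∑' k : ℤ, ∑' j : ℤ,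
          cexp (-(π : ℂ) * (t / z.im) * ((j : ℂ) + (k : ℂ) * (z.re : ℂ)) ^ 2
            - (π : ℂ) * (t * z.im) * (k : ℂ) ^ 2) := by
        rw [mul_assoc]
        congr 1
        rw [← tsum_mul_left]
        refine tsum_congr fun k => ?_
        rw [mul_assoc]
        congr 1
        rw [← tsum_mul_right]
        refine tsum_congr fun j => ?_
        rw [← Complex.exp_add]
        congr 1
        push_cast
        field_simp
        ring
    _ = (t : ℂ) * θ z t := by
        rw [theta_double z ht]
        congr 1
        have hsq : Real.sqrt (t * z.im) * (1 / Real.sqrt (z.im / t)) = t := by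
          rw [one_div, ← Real.sqrt_inv, ← Real.sqrt_mul hty.le,
            show t * z.im * (z.im / t)⁻¹ = t ^ 2 by field_simp]
          exact Real.sqrt_sq ht.le
        calc (Real.sqrt (t * z.im) : ℂ) * (1 / (Real.sqrt (z.im / t) : ℂ))
            = ((Real.sqrt (t * z.im) * (1 / Real.sqrt (z.im / t)) : ℝ) : ℂ) := by
              push_cast; ring
          _ = (t : ℂ) := by rw [hsq]

/-! ### Decay at infinity -/

lemma summable_masked (z : UpperHalfPlane) {u : ℝ} (hu : 0 < u) :
    Summable fun p : ℤ × ℤ => if p ≠ 0 then rexp (-π * Q z p * u) else 0 := by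
  apply (summable_exp_Q z hu).of_nonneg_of_le
  · intro p
    by_cases hp : p ≠ 0 <;> simp [hp, (Real.exp_pos _).le]
  · intro p
    by_cases hp : p ≠ 0 <;> simp [hp, (Real.exp_pos _).le]

lemma theta_sub_one_isBigO (z : UpperHalfPlane) (r : ℝ) :
    (fun t => θ z t - 1) =O[atTop] (fun t : ℝ => t ^ r) := by
  have hv : 0 < π * δ z := mul_pos Real.pi_pos (δ_pos z)
  set C0 : ℝ := ∑' p : ℤ × ℤ, (if p ≠ 0 then rexp (-π * Q z p) else 0) with hC0
  have hbound : ∀ t : ℝ, 1 ≤ t →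
      ‖θ z t - 1‖ ≤ (rexp (π * δ z) * C0) * rexp (-(π * δ z) * t) := by
    intro t htt
    have ht : 0 < t := lt_of_lt_of_le one_pos htt
    have hs := hasSum_theta_sub_one z ht
    have hnorm : ∀ p : ℤ × ℤ, ‖(if p ≠ 0 then (1:ℂ) else 0) * (rexp (-π * Q z p * t) : ℂ)‖
        = if p ≠ 0 then rexp (-π * Q z p * t) else 0 := by
      intro p
      by_cases hp : p ≠ 0
      · rw [if_pos hp, if_pos hp, one_mul, Complex.norm_real, Real.norm_eq_abs,
          abs_of_pos (Real.exp_pos _)]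
      · rw [if_neg hp, if_neg hp, zero_mul, norm_zero]
    have hsumnorm : Summable fun p : ℤ × ℤ =>
        ‖(if p ≠ 0 then (1:ℂ) else 0) * (rexp (-π * Q z p * t) : ℂ)‖ :=
      (summable_masked z ht).congr fun p => (hnorm p).symm
    have h1 : ‖θ z t - 1‖ ≤ ∑' p : ℤ × ℤ,
        ‖(if p ≠ 0 then (1:ℂ) else 0) * (rexp (-π * Q z p * t) : ℂ)‖ := by
      rw [← hs.tsum_eq]
      exact norm_tsum_le_tsum_norm hsumnorm
    have h2 : ∑' p : ℤ × ℤ, ‖(if p ≠ 0 then (1:ℂ) else 0) * (rexp (-π * Q z p * t) : ℂ)‖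
        ≤ ∑' p : ℤ × ℤ, (rexp (π * δ z) * rexp (-(π * δ z) * t))
            * (if p ≠ 0 then rexp (-π * Q z p) else 0) := by
      have hm1 : Summable fun p : ℤ × ℤ => (if p ≠ 0 then rexp (-π * Q z p) else 0) :=
        (summable_masked z one_pos).congr fun p => by rw [mul_one]
      apply Summable.tsum_le_tsum _ hsumnorm (hm1.mul_left _)
      intro p
      rw [hnorm p]
      by_cases hp : p ≠ 0
      · rw [if_pos hp, if_pos hp, ← Real.exp_add, ← Real.exp_add]
        apply Real.exp_le_exp.mpr
        have hQδ := Q_ge_of_ne z hp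
        have h3 : π * δ z * (t - 1) ≤ π * Q z p * (t - 1) :=
          mul_le_mul_of_nonneg_right
            (mul_le_mul_of_nonneg_left hQδ Real.pi_pos.le) (by linarith)
        nlinarith
      · simp [hp]
    have h4 : ∑' p : ℤ × ℤ, (rexp (π * δ z) * rexp (-(π * δ z) * t))
        * (if p ≠ 0 then rexp (-π * Q z p) else 0)
        = (rexp (π * δ z) * C0) * rexp (-(π * δ z) * t) := by
      rw [tsum_mul_left, ← hC0]
      ring
    calc ‖θ z t - 1‖ ≤ _ := h1
      _ ≤ _ := h2
      _ = _ := h4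
  have h2 : (fun t => θ z t - 1) =O[atTop] fun t : ℝ => rexp (-(π * δ z) * t) := by
    rw [isBigO_iff]
    refine ⟨rexp (π * δ z) * C0, ?_⟩
    filter_upwards [eventually_ge_atTop (1:ℝ)] with t htt
    rw [Real.norm_eq_abs, abs_of_pos (Real.exp_pos _)]
    exact hbound t htt
  exact h2.trans (isLittleO_exp_neg_mul_rpow_atTop hv r).isBigO

/-! ### Summability of the Dirichlet series -/

lemma summable_Q_rpow (z : UpperHalfPlane) {σ : ℝ} (hσ : 1 < σ) :
    Summable fun p : ℤ × ℤ => (if p ≠ 0 then (1:ℝ) else 0) / Q z p ^ σ := by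
  have h2σ : (2:ℝ) < 2 * σ := by linarith
  have hs : Summable fun v : Fin 2 → ℤ => ‖v‖ ^ (-(2 * σ)) :=
    EisensteinSeries.summable_one_div_norm_rpow h2σ
  have hs2 : Summable fun p : ℤ × ℤ => ‖![p.1, p.2]‖ ^ (-(2 * σ)) := by
    have he := ((finTwoArrowEquiv ℤ).symm.summable_iff
      (f := fun v : Fin 2 → ℤ => ‖v‖ ^ (-(2 * σ)))).mpr hs
    refine he.congr fun p => ?_
    simp [finTwoArrowEquiv_symm_apply, Function.comp]
  apply (hs2.mul_left ((δ z) ^ (-σ))).of_nonneg_of_le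
  · intro p
    by_cases hp : p ≠ 0
    · rw [if_pos hp]
      have := Q_pos z hp
      positivity
    · rw [if_neg hp, zero_div]
  · intro p
    by_cases hp : p ≠ 0
    · rw [if_pos hp]
      have hQ := Q_pos z hp
      have hlow : δ z * ‖![p.1, p.2]‖ ^ 2 ≤ Q z p := Q_lower z p
      have hnorm1 : (1:ℝ) ≤ ‖![p.1, p.2]‖ := one_le_norm_vec hp
      have hbase : 0 < δ z * ‖![p.1, p.2]‖ ^ 2 :=
        mul_pos (δ_pos z) (by nlinarith : (0:ℝ) < ‖![p.1, p.2]‖ ^ 2)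
      have h1 : (δ z * ‖![p.1, p.2]‖ ^ 2) ^ σ ≤ Q z p ^ σ :=
        Real.rpow_le_rpow hbase.le hlow (by linarith)
      have h2 : (0:ℝ) < (δ z * ‖![p.1, p.2]‖ ^ 2) ^ σ := Real.rpow_pos_of_pos hbase σ
      have h3 : 1 / Q z p ^ σ ≤ 1 / (δ z * ‖![p.1, p.2]‖ ^ 2) ^ σ :=
        one_div_le_one_div_of_le h2 h1
      refine h3.trans (le_of_eq ?_)
      rw [Real.mul_rpow (δ_pos z).le (by positivity),
        ← Real.rpow_natCast ‖![p.1, p.2]‖ 2, ← Real.rpow_mul (norm_nonneg _)]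
      rw [one_div, mul_inv, ← Real.rpow_neg (δ_pos z).le,
        ← Real.rpow_neg (norm_nonneg _)]
      norm_num
    · rw [if_neg hp, zero_div]
      exact mul_nonneg (Real.rpow_nonneg (δ_pos z).le _) (Real.rpow_nonneg (norm_nonneg _) _)

/-! ### cpow manipulations -/

lemma ofReal_cpow_of_pos {x : ℝ} (hx : 0 < x) (s : ℂ) :
    (x : ℂ) ^ s = cexp ((Real.log x : ℂ) * s) := by
  rw [Complex.cpow_def_of_ne_zero (Complex.ofReal_ne_zero.mpr hx.ne'),
    ← Complex.ofReal_log hx.le]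

lemma term_eq (z : UpperHalfPlane) {p : ℤ × ℤ} (hp : p ≠ 0) (s : ℂ) :
    (1 : ℂ) / ((Q z p : ℝ) : ℂ) ^ s
      = (z.im : ℂ) ^ s
        / (((‖(p.1 : ℂ) * (z : ℂ) + (p.2 : ℂ)‖ : ℝ) : ℂ)) ^ (2 * s) := by
  have hr := abs_linear_pos z hp
  have hy := z.im_pos
  have hQ := Q_pos z hp
  rw [ofReal_cpow_of_pos hQ, ofReal_cpow_of_pos hy, ofReal_cpow_of_pos hr,
    one_div, ← Complex.exp_neg, ← Complex.exp_sub]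
  congr 1
  have hlog : Real.log (Q z p)
      = 2 * Real.log ‖(p.1 : ℂ) * (z : ℂ) + (p.2 : ℂ)‖ - Real.log z.im := by
    rw [Q, Real.log_div (pow_ne_zero 2 hr.ne') hy.ne', Real.log_pow]
    push_cast
    ring
  rw [hlog]
  push_cast
  ring

/-! ### The FE-pair -/

def pair (z : UpperHalfPlane) : WeakFEPair ℂ where
  f := θ z
  g := θ z
  f₀ := 1
  g₀ := 1
  k := 1
  ε := 1
  hf_int := (continuousOn_theta z).locallyIntegrableOn measurableSet_Ioi
  hg_int := (continuousOn_theta z).locallyIntegrableOn measurableSet_Ioi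
  hk := one_pos
  hε := one_ne_zero
  h_feq := fun x hx => by
    have h := theta_FE z (mem_Ioi.mp hx)
    rw [h, Real.rpow_one]
    simp [smul_eq_mul]
  hf_top := theta_sub_one_isBigO z
  hg_top := theta_sub_one_isBigO z

lemma pair_symm (z : UpperHalfPlane) : (pair z).symm = pair z := by
  unfold pair WeakFEPair.symm
  congr 1
  exact inv_one

lemma pair_mero (z : UpperHalfPlane) :
    MeromorphicOn (fun s => (1 / 2 : ℂ) * (pair z).Λ s) univ := by
  have h0 : MeromorphicOn (pair z).Λ₀ univ :=
    (analyticOnNhd_univ_iff_differentiable.mpr (pair z).differentiable_Λ₀).meromorphicOn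
  have hid : MeromorphicOn (fun s : ℂ => s) univ :=
    analyticOnNhd_id.meromorphicOn
  have h1 : MeromorphicOn (fun s : ℂ => (1 / s) • ((pair z).f₀ : ℂ)) univ := by
    simp only [smul_eq_mul]
    exact (analyticOnNhd_const.meromorphicOn.div hid).mul analyticOnNhd_const.meromorphicOn
  have h2 : MeromorphicOn
      (fun s : ℂ => ((pair z).ε / (((pair z).k : ℂ) - s)) • ((pair z).g₀ : ℂ)) univ := by
    simp only [smul_eq_mul]
    exact ((analyticOnNhd_const.meromorphicOn.div
      ((analyticOnNhd_const.sub analyticOnNhd_id).meromorphicOn)).mul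
      analyticOnNhd_const.meromorphicOn)
  have hΛ : MeromorphicOn (pair z).Λ univ := by
    have : (pair z).Λ = fun s => (pair z).Λ₀ s - (1 / s) • ((pair z).f₀ : ℂ)
        - (((pair z).ε / (((pair z).k : ℂ) - s)) • ((pair z).g₀ : ℂ)) := rfl
    rw [this]
    exact (h0.sub h1).sub h2
  exact analyticOnNhd_const.meromorphicOn.mul hΛ

lemma pair_FE (z : UpperHalfPlane) (s : ℂ) : (pair z).Λ (1 - s) = (pair z).Λ s := by
  have h := (pair z).functional_equation s
  rw [pair_symm] at h
  have hk : (pair z).k = (1 : ℝ) := rfl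
  have hε : (pair z).ε = (1 : ℂ) := rfl
  rw [hk, hε] at h
  simpa using h

lemma G_eq (z : UpperHalfPlane) {s : ℂ} (hs : 1 < s.re) :
    (1 / 2 : ℂ) * (pair z).Λ s = (1 / 2 : ℂ) * (Real.pi : ℂ) ^ (-s) * Complex.Gamma s *
      ∑' p : ℤ × ℤ, if p ≠ 0 then
        ((z.im : ℂ) ^ s /
          (((‖(p.1 : ℂ) * (z : ℂ) + (p.2 : ℂ)‖ : ℝ) : ℂ)) ^ (2 * s))
      else 0 := by
  have hkre : (pair z).k < s.re := by change (1:ℝ) < s.re; exact hs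
  have hM : mellin (fun t : ℝ => θ z t - 1) s = (pair z).Λ s :=
    ((pair z).hasMellin hkre).2
  have hq : ∀ p : ℤ × ℤ, (if p ≠ 0 then (1:ℂ) else 0) = 0 ∨ 0 < Q z p := by
    intro p
    by_cases hp : p = 0
    · left; simp [hp]
    · right; exact Q_pos z hp
  have hsum : Summable fun p : ℤ × ℤ => ‖if p ≠ 0 then (1:ℂ) else 0‖ / Q z p ^ s.re := by
    refine (summable_Q_rpow z hs).congr fun p => ?_
    by_cases hp : p ≠ 0 <;> simp [hp]
  have hD := hasSum_mellin_pi_mul (F := fun t : ℝ => θ z t - 1)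
    (a := fun p : ℤ × ℤ => if p ≠ 0 then (1:ℂ) else 0) (q := Q z) hq
    (by linarith : 0 < s.re)
    (fun t ht => hasSum_theta_sub_one z (mem_Ioi.mp ht)) hsum
  rw [← hM, ← hD.tsum_eq, ← tsum_mul_left, ← tsum_mul_left]
  refine tsum_congr fun p => ?_
  by_cases hp : p ≠ 0
  · simp only [if_pos hp]
    rw [← term_eq z hp s]
    ring
  · simp only [if_neg hp]
    ring

end SelbergProof

end

/-- Selberg's theorem: the completed Eisenstein series
`ξ(2s) E(z,s) = (1/2) π^{-s} Γ(s) ∑_{(m,n)≠(0,0)} y^s/|mz+n|^{2s}` admits a meromorphic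
continuation in `s` to all of `ℂ` and satisfies the functional equation `s ↦ 1−s`. -/
theorem selberg_eisenstein_continuation :
    ∃ G : UpperHalfPlane → ℂ → ℂ,
      (∀ z : UpperHalfPlane, MeromorphicOn (G z) Set.univ) ∧
      (∀ z : UpperHalfPlane, ∀ s : ℂ, 1 < s.re →
        G z s = (1 / 2 : ℂ) * (Real.pi : ℂ) ^ (-s) * Complex.Gamma s *
          ∑' p : ℤ × ℤ, if p ≠ 0 then
            ((z.im : ℂ) ^ s /
              (((‖(p.1 : ℂ) * (z : ℂ) + (p.2 : ℂ)‖ : ℝ) : ℂ)) ^ (2 * s))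
          else 0) ∧
      (∀ z : UpperHalfPlane, ∀ s : ℂ, G z s = G z (1 - s)) := by
  refine ⟨fun z s => (1 / 2 : ℂ) * (SelbergProof.pair z).Λ s,
    fun z => SelbergProof.pair_mero z,
    fun z s hs => SelbergProof.G_eq z hs,
    fun z s => ?_⟩
  show (1 / 2 : ℂ) * (SelbergProof.pair z).Λ s = (1 / 2 : ℂ) * (SelbergProof.pair z).Λ (1 - s)
  rw [SelbergProof.pair_FE z s]
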